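/- There exists a finite MDP and a state s⁻ such that V*(s⁻) − V*_k(s⁻) = 2γR/(1−γ) for all persistences k ≥ 2, i.e., the performance loss bound 2γR_max/(1−γ) is tight: concretely in the 4-state MDP where from s⁻ action a₁ leads to s₁ with reward 0 and action a₂ leads to absorbing state s₃ with reward −R thereafter, from s₁ action a₂ leads to absorbing state s₂ with reward R thereafter and action a₁ leads to s₃, one has V*(s⁻) = γR/(1−γ) while V*_k(s⁻) = −γR/(1−γ) for every k ≥ 2. -/

import Mathlib

inductive St | sm | s1 | s2 | s3
deriving DecidableEq

inductive Ac | a1 | a2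
deriving DecidableEq

def step : St → Ac → St
  | .sm, .a1 => .s1
  | .sm, .a2 => .s3
  | .s1, .a2 => .s2
  | .s1, .a1 => .s3
  | .s2, _ => .s2
  | .s3, _ => .s3

def rew (R : ℝ) : St → Ac → ℝ
  | .sm, _ => 0
  | .s1, .a2 => R
  | .s1, .a1 => -R
  | .s2, _ => R
  | .s3, _ => -R

def traj (s : St) (a : ℕ → Ac) : ℕ → St
  | 0 => s
  | t + 1 => step (traj s a t) (a t)

noncomputable def ret (γ R : ℝ) (s : St) (a : ℕ → Ac) : ℝ :=
  ∑' t : ℕ, γ ^ t * rew R (traj s a t) (a t)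

/-- Optimal value function of the deterministic MDP. -/
noncomputable def Vstar (γ R : ℝ) (s : St) : ℝ :=
  ⨆ a : ℕ → Ac, ret γ R s a

/-- Optimal value function at persistence `k`: the supremum over action sequences that
are constant over consecutive blocks of length `k`. -/
noncomputable def Vpers (γ R : ℝ) (k : ℕ) (s : St) : ℝ :=
  ⨆ a : {a : ℕ → Ac // ∀ t, a t = a (k * (t / k))}, ret γ R s a.1

instance : Inhabited Ac := ⟨Ac.a1⟩

lemma abs_rew_le (R : ℝ) (hR : 0 < R) (s : St) (b : Ac) : |rew R s b| ≤ R := by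
  cases s <;> cases b <;> simp [rew, abs_of_pos hR] <;> linarith

lemma rew_le (R : ℝ) (hR : 0 < R) (s : St) (b : Ac) : rew R s b ≤ R := by
  cases s <;> cases b <;> simp [rew] <;> linarith

lemma summable_aux (γ : ℝ) (hγ0 : 0 < γ) (hγ1 : γ < 1) (g : ℕ → ℝ) (C : ℝ)
    (hg : ∀ t, |g t| ≤ C) : Summable (fun t => γ ^ t * g t) := by
  apply Summable.of_norm_bounded (g := fun t => γ ^ t * C)
  · exact (summable_geometric_of_lt_one hγ0.le hγ1).mul_right C
  · intro t
    rw [Real.norm_eq_abs, abs_mul, abs_pow, abs_of_pos hγ0]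
    exact mul_le_mul_of_nonneg_left (hg t) (pow_nonneg hγ0.le t)

lemma tsum_tail (γ c : ℝ) (hγ0 : 0 < γ) (hγ1 : γ < 1) (g : ℕ → ℝ)
    (h0 : g 0 = 0) (hs : ∀ t, 1 ≤ t → g t = c) :
    ∑' t : ℕ, γ ^ t * g t = γ * c / (1 - γ) := by
  have hne : (1 : ℝ) - γ ≠ 0 := by linarith
  have hfun : (fun t => γ ^ t * g t) =
      fun t => γ ^ t * c - (if t = 0 then c else 0) := by
    funext t
    cases t with
    | zero => simp [h0]
    | succ n => simp [hs (n + 1) (Nat.succ_le_succ (Nat.zero_le n))]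
  rw [hfun]
  have h1 : Summable (fun t : ℕ => γ ^ t * c) :=
    (summable_geometric_of_lt_one hγ0.le hγ1).mul_right c
  have h2 : Summable (fun t : ℕ => (if t = 0 then c else 0 : ℝ)) := by
    apply summable_of_ne_finset_zero (s := {0})
    intro t ht
    simp only [Finset.mem_singleton] at ht
    simp [ht]
  rw [Summable.tsum_sub h1 h2, tsum_mul_right, tsum_geometric_of_lt_one hγ0.le hγ1,
    show (∑' b : ℕ, (if b = 0 then c else 0 : ℝ)) = c by simp]
  field_simp
  ring

lemma traj_absorb (a : ℕ → Ac) (s : St) (n : ℕ) (z : St)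
    (hz : ∀ b, step z b = z) (h : traj s a n = z) :
    ∀ m, traj s a (n + m) = z := by
  intro m
  induction m with
  | zero => simpa using h
  | succ i ih =>
    have : n + (i + 1) = (n + i) + 1 := by ring
    rw [this]
    simp [traj, ih, hz]

lemma ret_eq (γ R : ℝ) (hγ0 : 0 < γ) (hγ1 : γ < 1) (_hR : 0 < R) (a : ℕ → Ac)
    (c : ℝ) (hs : ∀ t, 1 ≤ t → rew R (traj St.sm a t) (a t) = c) :
    ret γ R St.sm a = γ * c / (1 - γ) := by
  apply tsum_tail γ c hγ0 hγ1 _ _ hs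
  cases h : a 0 <;> simp [traj, rew]

theorem stmt_8 (R γ : ℝ) (hR : 0 < R) (hγ0 : 0 < γ) (hγ1 : γ < 1)
    (k : ℕ) (hk : 2 ≤ k) :
    Vstar γ R St.sm = γ * R / (1 - γ) ∧
      Vpers γ R k St.sm = -(γ * R / (1 - γ)) ∧
      Vstar γ R St.sm - Vpers γ R k St.sm = 2 * γ * R / (1 - γ) := by
  have hne : (1 : ℝ) - γ ≠ 0 := by linarith
  -- Vstar
  have hub : ∀ a : ℕ → Ac, ret γ R St.sm a ≤ γ * R / (1 - γ) := by
    intro a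
    have hsum1 : Summable (fun t => γ ^ t * rew R (traj St.sm a t) (a t)) :=
      summable_aux γ hγ0 hγ1 _ R (fun t => abs_rew_le R hR _ _)
    set g : ℕ → ℝ := fun t => if t = 0 then 0 else R with hg
    have hsum2 : Summable (fun t => γ ^ t * g t) := by
      apply summable_aux γ hγ0 hγ1 _ R
      intro t
      by_cases h : t = 0 <;> simp [hg, h, abs_of_pos hR, hR.le]
    have hle : ∀ t, γ ^ t * rew R (traj St.sm a t) (a t) ≤ γ ^ t * g t := by
      intro t
      cases t with
      | zero =>
        have : rew R (traj St.sm a 0) (a 0) = 0 := by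
          cases h : a 0 <;> simp [traj, rew]
        simp [this, hg]
      | succ n =>
        have : g (n + 1) = R := by simp [hg]
        rw [this]
        exact mul_le_mul_of_nonneg_left (rew_le R hR _ _) (pow_nonneg hγ0.le _)
    have := Summable.tsum_le_tsum hle hsum1 hsum2
    calc ret γ R St.sm a ≤ ∑' t, γ ^ t * g t := this
      _ = γ * R / (1 - γ) := by
          apply tsum_tail γ R hγ0 hγ1 g (by simp [hg])
          intro t ht
          simp [hg, show t ≠ 0 by omega]
  have haopt : ret γ R St.sm (fun t => if t = 0 then Ac.a1 else Ac.a2)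
      = γ * R / (1 - γ) := by
    set a : ℕ → Ac := fun t => if t = 0 then Ac.a1 else Ac.a2 with ha
    apply ret_eq γ R hγ0 hγ1 hR
    have h2 : traj St.sm a 2 = St.s2 := by
      simp [traj, step, ha]
    have habs := traj_absorb a St.sm 2 St.s2 (fun b => by cases b <;> rfl) h2
    intro t ht
    rcases t with _ | _ | n
    · omega
    · simp [traj, step, rew, ha]
    · have := habs n
      rw [show 2 + n = n + 2 by ring] at this
      rw [this]
      cases h : a (n + 2) <;> simp [rew]
  have hVstar : Vstar γ R St.sm = γ * R / (1 - γ) := by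
    apply le_antisymm
    · exact ciSup_le hub
    · rw [← haopt]
      exact le_ciSup ⟨γ * R / (1 - γ), by rintro x ⟨a, rfl⟩; exact hub a⟩ _
  -- Vpers : every persistent sequence yields exactly -γR/(1-γ)
  have hpers : ∀ a : {a : ℕ → Ac // ∀ t, a t = a (k * (t / k))},
      ret γ R St.sm a.1 = -(γ * R / (1 - γ)) := by
    rintro ⟨a, ha⟩
    have ha1 : a 1 = a 0 := by
      have := ha 1
      rwa [Nat.div_eq_of_lt (by omega), Nat.mul_zero] at this
    have key : ret γ R St.sm a = γ * (-R) / (1 - γ) := by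
      apply ret_eq γ R hγ0 hγ1 hR
      cases h0 : a 0 with
      | a1 =>
        have h2 : traj St.sm a 2 = St.s3 := by
          simp [traj, step, h0, ha1]
        have habs := traj_absorb a St.sm 2 St.s3 (fun b => by cases b <;> rfl) h2
        intro t ht
        rcases t with _ | _ | n
        · omega
        · simp [traj, step, rew, h0, ha1]
        · have := habs n
          rw [show 2 + n = n + 2 by ring] at this
          rw [this]
          cases h : a (n + 2) <;> simp [rew]
      | a2 =>
        have h1 : traj St.sm a 1 = St.s3 := by simp [traj, step, h0]
        have habs := traj_absorb a St.sm 1 St.s3 (fun b => by cases b <;> rfl) h1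
        intro t ht
        obtain ⟨m, rfl⟩ := Nat.exists_eq_add_of_le ht
        rw [habs m]
        cases h : a (1 + m) <;> simp [rew]
    rw [key]
    ring
  have hVpers : Vpers γ R k St.sm = -(γ * R / (1 - γ)) := by
    have hne' : Nonempty {a : ℕ → Ac // ∀ t, a t = a (k * (t / k))} :=
      ⟨⟨fun _ => Ac.a2, fun _ => rfl⟩⟩
    unfold Vpers
    rw [show (fun a : {a : ℕ → Ac // ∀ t, a t = a (k * (t / k))} => ret γ R St.sm a.1)
        = fun _ => -(γ * R / (1 - γ)) from funext hpers]
    exact ciSup_const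
  refine ⟨hVstar, hVpers, ?_⟩
  rw [hVstar, hVpers]
  ring
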